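/- Antisymmetry of the form ε₊ on homology: let E be a finite set, σ₀, σ₁ permutations of E, m a perfect matching, ρ_{m,c} = (I − ς_{m,c})^{-1}, and let H₁ ⊆ ℤ^E be the subgroup generated by all differences m' − m'' of perfect matchings. Then for all h₁, h₂ ∈ H₁ one has h₁ᵀ (ρ_{m,0} + ρ_{m,1} − I) h₂ = − h₂ᵀ (ρ_{m,0} + ρ_{m,1} − I) h₁. -/

import Mathlib

open Finset Matrix

variable {E : Type*}

/-- A perfect matching of `(E, σ₀, σ₁)`: a `{0,1}`-valued function on `E` such that every
cycle (orbit) of `σ₀` and every cycle of `σ₁` contains exactly one element with value `1`. -/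
def IsPerfectMatching (σ₀ σ₁ : Equiv.Perm E) (m : E → ℤ) : Prop :=
  (∀ e, m e = 0 ∨ m e = 1) ∧
  (∀ e, ∃! e', σ₀.SameCycle e e' ∧ m e' = 1) ∧
  (∀ e, ∃! e', σ₁.SameCycle e e' ∧ m e' = 1)

/-- The "broken" permutation matrix `ς_{m,σ}`: the matrix of the permutation `σ`
(with `(σ e, e)`-entry `1`) in which every column `e` with `m e = 1` is replaced by zero. -/
def brokenPermMatrix [DecidableEq E] (σ : Equiv.Perm E) (m : E → ℤ) : Matrix E E ℤ :=
  Matrix.of fun e' e => if e' = σ e ∧ m e = 0 then 1 else 0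

/-- The matrix `ρ_{m,σ} = (I - ς_{m,σ})⁻¹`. -/
noncomputable def rhoMatrix [Fintype E] [DecidableEq E] (σ : Equiv.Perm E) (m : E → ℤ) :
    Matrix E E ℤ :=
  (1 - brokenPermMatrix σ m)⁻¹

/-- The subgroup `H₁ ⊆ ℤ^E` generated by all differences of perfect matchings. -/
def matchingHomology (σ₀ σ₁ : Equiv.Perm E) : AddSubgroup (E → ℤ) :=
  AddSubgroup.closure
    {x | ∃ m' m'', IsPerfectMatching σ₀ σ₁ m' ∧ IsPerfectMatching σ₀ σ₁ m'' ∧ x = m' - m''}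

section Aux

variable [Fintype E] [DecidableEq E]

lemma broken_pow_apply (σ : Equiv.Perm E) (m : E → ℤ) (k : ℕ) (e' e : E) :
    (brokenPermMatrix σ m ^ k) e' e =
      if e' = (σ ^ k) e ∧ ∀ j < k, m ((σ ^ j) e) = 0 then 1 else 0 := by
  induction k generalizing e' e with
  | zero => simp [Matrix.one_apply]
  | succ k ih =>
    rw [pow_succ, Matrix.mul_apply]
    have hstep : ∀ a, (brokenPermMatrix σ m ^ k) e' a * brokenPermMatrix σ m a e
        = if a = σ e then
            (if (e' = (σ ^ k) (σ e) ∧ ∀ j < k, m ((σ ^ j) (σ e)) = 0) ∧ m e = 0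
              then 1 else 0) else 0 := by
      intro a
      by_cases ha : a = σ e
      · subst ha
        rw [ih]
        simp only [brokenPermMatrix, Matrix.of_apply, if_pos rfl]
        split_ifs <;> simp_all
      · simp [brokenPermMatrix, ha]
    rw [Finset.sum_congr rfl fun a _ => hstep a, Finset.sum_ite_eq' Finset.univ (σ e)]
    simp only [Finset.mem_univ, if_true]
    have hcond : ((e' = (σ ^ k) (σ e) ∧ ∀ j < k, m ((σ ^ j) (σ e)) = 0) ∧ m e = 0)
        ↔ (e' = (σ ^ (k + 1)) e ∧ ∀ j < k + 1, m ((σ ^ j) e) = 0) := by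
      have h1 : (σ ^ (k + 1)) e = (σ ^ k) (σ e) := by
        rw [pow_succ]; rfl
      constructor
      · rintro ⟨⟨he, hall⟩, h0⟩
        refine ⟨by rw [h1]; exact he, ?_⟩
        intro j hj
        cases j with
        | zero => simpa using h0
        | succ i =>
          rw [pow_succ, Equiv.Perm.mul_apply]
          exact hall i (by omega)
      · rintro ⟨he, hall⟩
        refine ⟨⟨by rw [← h1]; exact he, fun j hj => ?_⟩, by simpa using hall 0 (by omega)⟩
        have := hall (j + 1) (by omega)
        rwa [pow_succ, Equiv.Perm.mul_apply] at this
    rw [if_congr hcond rfl rfl]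

lemma broken_nilpotent (σ : Equiv.Perm E) (m : E → ℤ)
    (hm : ∀ e, ∃! e', σ.SameCycle e e' ∧ m e' = 1) :
    brokenPermMatrix σ m ^ (orderOf σ) = 0 := by
  ext e' e
  rw [broken_pow_apply]
  simp only [Matrix.zero_apply, ite_eq_right_iff, one_ne_zero]
  rintro ⟨-, hall⟩
  obtain ⟨f, ⟨hcyc, hf1⟩, -⟩ := hm e
  obtain ⟨i, hi, hfe⟩ := hcyc.exists_pow_eq'
  have := hall i hi
  rw [hfe, hf1] at this
  exact absurd this one_ne_zero

lemma oneSub_mul_rho (σ : Equiv.Perm E) (m : E → ℤ)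
    (hm : ∀ e, ∃! e', σ.SameCycle e e' ∧ m e' = 1) :
    (1 - brokenPermMatrix σ m) * rhoMatrix σ m = 1 := by
  have hnil : IsNilpotent (brokenPermMatrix σ m) := ⟨orderOf σ, broken_nilpotent σ m hm⟩
  exact Matrix.mul_nonsing_inv _
    ((Matrix.isUnit_iff_isUnit_det _).mp hnil.isUnit_one_sub)

lemma rho_mul_oneSub (σ : Equiv.Perm E) (m : E → ℤ)
    (hm : ∀ e, ∃! e', σ.SameCycle e e' ∧ m e' = 1) :
    rhoMatrix σ m * (1 - brokenPermMatrix σ m) = 1 := by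
  have hnil : IsNilpotent (brokenPermMatrix σ m) := ⟨orderOf σ, broken_nilpotent σ m hm⟩
  exact Matrix.nonsing_inv_mul _
    ((Matrix.isUnit_iff_isUnit_det _).mp hnil.isUnit_one_sub)

/-- For a matched element `f`, the row `f` of `ρ` is the indicator of the cycle of `f`. -/
lemma rho_row (σ : Equiv.Perm E) (m : E → ℤ) (hm0 : ∀ e, m e = 0 ∨ m e = 1)
    (hm : ∀ e, ∃! e', σ.SameCycle e e' ∧ m e' = 1) {f : E} (hf : m f = 1) (e : E) :
    rhoMatrix σ m f e = if σ.SameCycle f e then 1 else 0 := by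
  set v : E → ℤ := fun e => if σ.SameCycle f e then 1 else 0 with hv
  have hvM : Matrix.vecMul v (1 - brokenPermMatrix σ m) = Pi.single f 1 := by
    funext a
    have key : (Matrix.vecMul v (1 - brokenPermMatrix σ m)) a
        = v a - (if m a = 0 then v (σ a) else 0) := by
      simp only [Matrix.vecMul, dotProduct, Matrix.sub_apply, Matrix.one_apply,
        brokenPermMatrix, Matrix.of_apply, mul_sub, mul_ite, mul_one, mul_zero]
      rw [Finset.sum_sub_distrib]
      congr 1
      · rw [Finset.sum_ite_eq' Finset.univ a v]; simp
      · by_cases hma : m a = 0 <;>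
          simp [hma, Finset.sum_ite_eq' Finset.univ (σ a) v]
    rw [key]
    by_cases hsc : σ.SameCycle f a
    · have hsc' : σ.SameCycle f (σ a) := (σ.sameCycle_apply_right).mpr hsc
      by_cases haf : a = f
      · subst haf
        have : ¬ (m a = 0) := by rw [hf]; norm_num
        simp [hv, hsc, hsc', this, Pi.single_eq_same]
      · have hma : m a = 0 := by
          rcases hm0 a with h | h
          · exact h
          · obtain ⟨w, -, hu⟩ := hm f
            have h1 := hu a ⟨hsc, h⟩
            have h2 := hu f ⟨Equiv.Perm.SameCycle.refl σ f, hf⟩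
            exact absurd (h1.trans h2.symm) haf
        simp [hv, hsc, hsc', hma, Pi.single_eq_of_ne haf]
    · have haf : a ≠ f := fun h => hsc (h ▸ Equiv.Perm.SameCycle.refl σ f)
      have hsc' : ¬ σ.SameCycle f (σ a) := fun h => hsc ((σ.sameCycle_apply_right).mp h)
      simp [hv, hsc, hsc', Pi.single_eq_of_ne haf]
  have hs : v = Matrix.vecMul (Pi.single f 1) (rhoMatrix σ m) := by
    calc v = Matrix.vecMul v 1 := by rw [Matrix.vecMul_one]
      _ = Matrix.vecMul v ((1 - brokenPermMatrix σ m) * rhoMatrix σ m) := by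
          rw [oneSub_mul_rho σ m hm]
      _ = Matrix.vecMul (Matrix.vecMul v (1 - brokenPermMatrix σ m)) (rhoMatrix σ m) := by
          rw [Matrix.vecMul_vecMul]
      _ = Matrix.vecMul (Pi.single f 1) (rhoMatrix σ m) := by rw [hvM]
  have := congrFun hs e
  simp only [hv] at this
  rw [this]
  simp [Matrix.vecMul, dotProduct, Pi.single_apply, ite_mul, one_mul, zero_mul,
    Finset.sum_ite_eq' Finset.univ f]

lemma sum_matching_cycle (σ : Equiv.Perm E) (m' : E → ℤ) (hm0 : ∀ e, m' e = 0 ∨ m' e = 1)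
    (hm : ∀ e, ∃! e', σ.SameCycle e e' ∧ m' e' = 1) (f : E) :
    ∑ e, (if σ.SameCycle f e then (1 : ℤ) else 0) * m' e = 1 := by
  obtain ⟨e₀, ⟨hc, h1⟩, hu⟩ := hm f
  rw [Finset.sum_eq_single e₀]
  · rw [if_pos hc, h1, one_mul]
  · intro b _ hb
    rcases hm0 b with h | h
    · simp [h]
    · by_cases hsc : σ.SameCycle f b
      · exact absurd (hu b ⟨hsc, h⟩) hb
      · simp [hsc]
  · simp

lemma diag_mulVec_rho_eq_zero (σ₀ σ₁ σ : Equiv.Perm E) (m : E → ℤ)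
    (hm0 : ∀ e, m e = 0 ∨ m e = 1)
    (hm : ∀ e, ∃! e', σ.SameCycle e e' ∧ m e' = 1)
    (hsel : ∀ m', IsPerfectMatching σ₀ σ₁ m' →
      (∀ e, m' e = 0 ∨ m' e = 1) ∧ ∀ e, ∃! e', σ.SameCycle e e' ∧ m' e' = 1)
    {x : E → ℤ} (hx : x ∈ matchingHomology σ₀ σ₁) :
    (Matrix.diagonal m).mulVec ((rhoMatrix σ m).mulVec x) = 0 := by
  induction hx using AddSubgroup.closure_induction with
  | mem x hx =>
    obtain ⟨m', m'', hm', hm'', rfl⟩ := hx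
    funext a
    rw [Matrix.mulVec_diagonal]
    rcases hm0 a with h0 | h1
    · simp [h0]
    · rw [h1, one_mul]
      simp only [Matrix.mulVec, dotProduct, Pi.zero_apply]
      calc ∑ e, rhoMatrix σ m a e * (m' - m'') e
          = ∑ e, ((if σ.SameCycle a e then (1 : ℤ) else 0) * m' e
              - (if σ.SameCycle a e then (1 : ℤ) else 0) * m'' e) := by
            refine Finset.sum_congr rfl fun e _ => ?_
            rw [rho_row σ m hm0 hm h1 e, Pi.sub_apply]
            ring
        _ = 1 - 1 := by
            rw [Finset.sum_sub_distrib,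
              sum_matching_cycle σ m' (hsel m' hm').1 (hsel m' hm').2 a,
              sum_matching_cycle σ m'' (hsel m'' hm'').1 (hsel m'' hm'').2 a]
        _ = 0 := by ring
  | zero => simp
  | add x y hx hy ihx ihy => rw [Matrix.mulVec_add, Matrix.mulVec_add, ihx, ihy, add_zero]
  | neg x hx ihx => rw [Matrix.mulVec_neg, Matrix.mulVec_neg, ihx, neg_zero]

lemma rho_symm_decomp (σ : Equiv.Perm E) (m : E → ℤ) (hm0 : ∀ e, m e = 0 ∨ m e = 1)
    (hm : ∀ e, ∃! e', σ.SameCycle e e' ∧ m e' = 1) :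
    rhoMatrix σ m + (rhoMatrix σ m)ᵀ - 1 =
      (rhoMatrix σ m)ᵀ * (Matrix.diagonal m * rhoMatrix σ m) := by
  set ς := brokenPermMatrix σ m with hς
  set ρ := rhoMatrix σ m with hρ
  have h1 : (1 - ς) * ρ = 1 := oneSub_mul_rho σ m hm
  have h2 : ρ * (1 - ς) = 1 := rho_mul_oneSub σ m hm
  have hts : ςᵀ * ς = 1 - Matrix.diagonal m := by
    ext a b
    rw [Matrix.mul_apply]
    simp only [Matrix.transpose_apply]
    by_cases hab : a = b
    · subst hab
      rcases hm0 a with h | h <;>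
        simp [hς, brokenPermMatrix, h, Finset.sum_ite_eq' Finset.univ (σ a),
          Matrix.sub_apply, Matrix.one_apply, Matrix.diagonal_apply_eq]
    · rw [Finset.sum_eq_zero]
      · simp [Matrix.sub_apply, Matrix.one_apply, hab, Matrix.diagonal_apply_ne _ hab]
      · intro e _
        simp only [hς, brokenPermMatrix, Matrix.of_apply]
        split_ifs with p q
        · exact absurd (σ.injective (p.1.symm.trans q.1)) hab
        · ring
        · ring
        · ring
  have hK : (1 - ς)ᵀ + (1 - ς) - (1 - ς)ᵀ * (1 - ς) = Matrix.diagonal m := by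
    have : (1 - ς)ᵀ * (1 - ς) = 1 - ς - ςᵀ + ςᵀ * ς := by
      rw [Matrix.transpose_sub, Matrix.transpose_one]
      noncomm_ring
    rw [this, hts, Matrix.transpose_sub, Matrix.transpose_one]
    noncomm_ring
  have hA : ρᵀ * (1 - ς)ᵀ = 1 := by
    rw [← Matrix.transpose_mul, h1, Matrix.transpose_one]
  calc ρ + ρᵀ - 1
      = ρᵀ * (1 - ς)ᵀ * ρ + ρᵀ * ((1 - ς) * ρ) - ρᵀ * (1 - ς)ᵀ * ((1 - ς) * ρ) := by
        rw [hA, h1, one_mul, mul_one, mul_one]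
    _ = ρᵀ * (((1 - ς)ᵀ + (1 - ς) - (1 - ς)ᵀ * (1 - ς)) * ρ) := by noncomm_ring
    _ = ρᵀ * (Matrix.diagonal m * ρ) := by rw [hK]

end Aux

/-- Antisymmetry of the form `ε₊` given by `ρ_{m,0} + ρ_{m,1} - I` on the subgroup `H₁`
generated by differences of perfect matchings. -/
theorem epsPlus_antisymm [Fintype E] [DecidableEq E]
    (σ₀ σ₁ : Equiv.Perm E) (m : E → ℤ) (hm : IsPerfectMatching σ₀ σ₁ m)
    (h₁ h₂ : E → ℤ)
    (hh₁ : h₁ ∈ matchingHomology σ₀ σ₁) (hh₂ : h₂ ∈ matchingHomology σ₀ σ₁) :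
    h₁ ⬝ᵥ (rhoMatrix σ₀ m + rhoMatrix σ₁ m - 1).mulVec h₂ =
      -(h₂ ⬝ᵥ (rhoMatrix σ₀ m + rhoMatrix σ₁ m - 1).mulVec h₁) := by
  obtain ⟨hm0, hmc0, hmc1⟩ := hm
  set A := rhoMatrix σ₀ m + rhoMatrix σ₁ m - 1 with hA
  have hswap : h₂ ⬝ᵥ A.mulVec h₁ = h₁ ⬝ᵥ Aᵀ.mulVec h₂ := by
    rw [Matrix.dotProduct_mulVec, ← Matrix.mulVec_transpose, dotProduct_comm]
  have hAAT : A + Aᵀ = (rhoMatrix σ₀ m)ᵀ * (Matrix.diagonal m * rhoMatrix σ₀ m)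
      + (rhoMatrix σ₁ m)ᵀ * (Matrix.diagonal m * rhoMatrix σ₁ m) := by
    rw [← rho_symm_decomp σ₀ m hm0 hmc0, ← rho_symm_decomp σ₁ m hm0 hmc1, hA]
    rw [Matrix.transpose_sub, Matrix.transpose_add, Matrix.transpose_one]
    abel
  have hz : (A + Aᵀ).mulVec h₂ = 0 := by
    rw [hAAT, Matrix.add_mulVec]
    simp only [← Matrix.mulVec_mulVec]
    rw [diag_mulVec_rho_eq_zero σ₀ σ₁ σ₀ m hm0 hmc0 (fun m' h => ⟨h.1, h.2.1⟩) hh₂,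
      diag_mulVec_rho_eq_zero σ₀ σ₁ σ₁ m hm0 hmc1 (fun m' h => ⟨h.1, h.2.2⟩) hh₂,
      Matrix.mulVec_zero, Matrix.mulVec_zero, add_zero]
  have hfin : h₁ ⬝ᵥ A.mulVec h₂ + h₁ ⬝ᵥ Aᵀ.mulVec h₂ = 0 := by
    rw [← dotProduct_add, ← Matrix.add_mulVec, hz, dotProduct_zero]
  rw [hswap]
  linarith
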